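/- For every positive integer i and integers m, n with i < m < n, one has C(m, i)^{<i>} < C(n, i)^{<i>}, and moreover C(n, i)^{<i>} = C(n+1, i+1). -/
import Mathlib


/-- `msucc i n` is Macaulay's `n^{<i>}`: from the `i`-binomial expansion
`n = C(n_i,i) + ... + C(n_j,j)` (computed greedily), replace each term
`C(n_k,k)` by `C(n_k+1,k+1)`.  By convention `msucc i 0 = 0` and `msucc 0 n = 0`. -/
def msucc : ℕ → ℕ → ℕ
  | 0, _ => 0
  | _ + 1, 0 => 0
  | (i + 1), (n + 1) =>
      let m := Nat.findGreatest (fun k => Nat.choose k (i + 1) ≤ n + 1) (n + i + 2)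
      Nat.choose (m + 1) (i + 2) + msucc i ((n + 1) - Nat.choose m (i + 1))

/-- An (infinite) O-sequence: starts with 1 and satisfies Macaulay's growth condition. -/
def IsOSeq (h : ℕ → ℕ) : Prop :=
  h 0 = 1 ∧ ∀ d, 1 ≤ d → h (d + 1) ≤ msucc d (h d)

/-- A finite O-sequence of length `d` (entries of degree `0,…,d`). -/
def FinOSeq (g : ℕ → ℕ) (d : ℕ) : Prop :=
  g 0 = 1 ∧ ∀ k, 1 ≤ k → k + 1 ≤ d → g (k + 1) ≤ msucc k (g k)

/-- First difference of a sequence, with `(Diff h) 0 = 1`. -/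
def Diff (h : ℕ → ℕ) : ℕ → ℕ := fun k => if k = 0 then 1 else h k - h (k - 1)

/-- An SI-sequence of socle degree `e`: symmetric and its first half is differentiable. -/
def IsSISeq (h : ℕ → ℕ) (e : ℕ) : Prop :=
  (∀ i ≤ e, h i = h (e - i)) ∧ FinOSeq (Diff h) (e / 2)

/-- Unimodality of `(h 0, …, h e)`. -/
def Unimodal (h : ℕ → ℕ) (e : ℕ) : Prop :=
  ∃ m ≤ e, (∀ i j, i ≤ j → j ≤ m → h i ≤ h j) ∧ (∀ i j, m ≤ i → i ≤ j → j ≤ e → h j ≤ h i)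

lemma msucc_zero (i : ℕ) : msucc i 0 = 0 := by
  cases i <;> rfl

lemma choose_strict_mono {i m n : ℕ} (hi : 1 ≤ i) (him : i ≤ m) (hmn : m < n) :
    Nat.choose m i < Nat.choose n i := by
  obtain ⟨j, rfl⟩ := Nat.exists_eq_add_of_le hi
  calc Nat.choose m (1 + j) < Nat.choose (m + 1) (1 + j) := by
        rw [Nat.add_comm 1 j] at *
        rw [Nat.choose_succ_succ']
        have : 0 < Nat.choose m j := Nat.choose_pos (le_trans (Nat.le_succ j) him)
        omega
    _ ≤ Nat.choose n (1 + j) := Nat.choose_le_choose _ hmn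

lemma sub_le_choose {i n : ℕ} (hi : 1 ≤ i) (hin : i ≤ n) : n + 1 ≤ Nat.choose n i + i := by
  induction n with
  | zero => omega
  | succ p ih =>
      rcases Nat.eq_or_lt_of_le hin with h | h
      · rw [← h, Nat.choose_self]; omega
      · have hip : i ≤ p := by omega
        have h1 : 0 < Nat.choose p (i - 1) := Nat.choose_pos (by omega)
        have h2 := ih hip
        obtain ⟨j, rfl⟩ : ∃ j, i = j + 1 := ⟨i - 1, by omega⟩
        rw [Nat.choose_succ_succ']
        simp at h1
        omega

lemma msucc_choose {i n : ℕ} (hi : 1 ≤ i) (hin : i ≤ n) :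
    msucc i (Nat.choose n i) = Nat.choose (n + 1) (i + 1) := by
  obtain ⟨i, rfl⟩ : ∃ j, i = j + 1 := ⟨i - 1, by omega⟩
  obtain ⟨N, hN⟩ : ∃ N, Nat.choose n (i + 1) = N + 1 :=
    ⟨Nat.choose n (i + 1) - 1, by have := Nat.choose_pos hin; omega⟩
  rw [hN]
  show Nat.choose (Nat.findGreatest (fun k => Nat.choose k (i + 1) ≤ N + 1) (N + i + 2) + 1)
        (i + 2) +
      msucc i ((N + 1) -
        Nat.choose (Nat.findGreatest (fun k => Nat.choose k (i + 1) ≤ N + 1) (N + i + 2))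
          (i + 1)) = _
  have hbound : n ≤ N + i + 2 := by
    have := sub_le_choose (i := i + 1) (by omega) hin
    omega
  have hfg : Nat.findGreatest (fun k => Nat.choose k (i + 1) ≤ N + 1) (N + i + 2) = n := by
    rw [Nat.findGreatest_eq_iff]
    refine ⟨hbound, fun _ => by rw [← hN], fun k hk hk' h => ?_⟩
    have := choose_strict_mono (i := i + 1) (by omega) hin hk
    omega
  rw [hfg, ← hN, Nat.sub_self, msucc_zero, Nat.add_zero]

/-- For `i < m < n`, one has `C(m,i)^{<i>} < C(n,i)^{<i>}`, and
`C(n,i)^{<i>} = C(n+1, i+1)`. -/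
theorem stmt15 (i m n : ℕ) (hi : 0 < i) (him : i < m) (hmn : m < n) :
    msucc i (Nat.choose m i) < msucc i (Nat.choose n i) ∧
    msucc i (Nat.choose n i) = Nat.choose (n + 1) (i + 1) := by
  rw [msucc_choose hi (by omega), msucc_choose hi (by omega)]
  exact ⟨choose_strict_mono (by omega) (by omega) (by omega), rfl⟩
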